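/- Let k, n be integers with 2 ≤ k ≤ n/2, let R be a commutative ring, and let M be a k × n matrix over R. For every r ∈ ℤ/nℤ and every m in the cyclic closed interval [r+k, r−2], the determinant of the (k+1) × (k+1) matrix whose (i,j) entry (1 ≤ i,j ≤ k+1) is P([r+i−1]^{k−1} ∪ {m+j−1}) equals 0. -/

import Mathlib

/-- Representative of `x : ZMod n` in `{1, …, n}`. -/
def rep (n : ℕ) (x : ZMod n) : ℕ := if x.val = 0 then n else x.val

/-- The cyclic segment `[r]^ℓ = {r, r+1, …, r+ℓ-1}` in `ZMod n`. -/
def cSeg (n : ℕ) (r : ZMod n) (ℓ : ℕ) : Finset (ZMod n) :=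
  (Finset.range ℓ).image (fun t : ℕ => r + (t : ZMod n))

/-- The cyclic closed interval `[a,b] = {a, a+1, …, b}` in `ZMod n`. -/
def cIcc (n : ℕ) (a b : ZMod n) : Finset (ZMod n) := cSeg n a ((b - a).val + 1)

/-- The Plücker coordinate `P(I)`: the determinant of the `k × k` submatrix of `M` on the
columns indexed by `I`, taken in increasing order of the representatives in `{1,…,n}`;
it is `0` if `I` is not a `k`-subset. -/
noncomputable def pluck {R : Type*} [CommRing R] {k n : ℕ}
    (M : Matrix (Fin k) (ZMod n) R) (I : Finset (ZMod n)) : R :=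
  if h : (I.image (rep n)).card = k ∧ I.card = k then
    Matrix.det (Matrix.of fun i j : Fin k =>
      M i ((((I.image (rep n)).orderIsoOfFin h.1 j : ℕ) : ZMod n)))
  else 0

section AuxLemmas

lemma aux_sign_eq_signAux {N : ℕ} (σ : Equiv.Perm (Fin N)) :
    Equiv.Perm.sign σ = Equiv.Perm.signAux σ := by
  refine Equiv.Perm.swap_induction_on σ ?_ ?_
  · simp [Equiv.Perm.signAux_one]
  · intro f x y hxy ih
    rw [Equiv.Perm.signAux_mul, map_mul, ih, Equiv.Perm.signAux_swap hxy,
      Equiv.Perm.sign_swap hxy]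

lemma aux_sign_sort {N : ℕ} (v : Fin N → ℕ) (σ : Equiv.Perm (Fin N))
    (h : StrictMono (v ∘ σ)) :
    Equiv.Perm.sign σ = (-1 : ℤˣ) ^
      ((Finset.univ.filter (fun p : Fin N × Fin N => p.2 < p.1 ∧ v p.1 ≤ v p.2)).card) := by
  have key : ∀ a b : Fin N, σ⁻¹ a ≤ σ⁻¹ b ↔ v a ≤ v b := by
    intro a b
    constructor
    · intro hab
      rcases eq_or_lt_of_le hab with h1 | h1
      · simp [show a = b from by simpa using congrArg σ h1]
      · have := h h1
        simpa using this.le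
    · intro hab
      by_contra hcon
      push_neg at hcon
      have := h hcon
      simp only [Function.comp_apply, Equiv.Perm.inv_def, Equiv.apply_symm_apply] at this
      omega
  have h1 : Equiv.Perm.sign σ = Equiv.Perm.signAux σ⁻¹ := by
    rw [← aux_sign_eq_signAux, Equiv.Perm.sign_inv]
  rw [h1]
  unfold Equiv.Perm.signAux
  have h2 : ∀ x ∈ Equiv.Perm.finPairsLT N,
      (if σ⁻¹ x.1 ≤ σ⁻¹ x.2 then (-1 : ℤˣ) else 1) =
      (if v x.1 ≤ v x.2 then (-1 : ℤˣ) else 1) := by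
    intro x _
    simp only [key x.1 x.2]
  rw [Finset.prod_congr rfl h2]
  have h3 : ∀ c : ℕ, (Finset.univ.filter
      (fun p : Fin N × Fin N => p.2 < p.1 ∧ v p.1 ≤ v p.2)).card = c →
      (∏ x ∈ Equiv.Perm.finPairsLT N, if v x.1 ≤ v x.2 then (-1 : ℤˣ) else 1) = (-1) ^ c := by
    intro c hc
    rw [← hc]
    rw [← Finset.prod_filter_mul_prod_filter_not (Equiv.Perm.finPairsLT N)
      (fun x => v x.1 ≤ v x.2)]
    have h4 : ∀ x ∈ (Equiv.Perm.finPairsLT N).filter (fun x => v x.1 ≤ v x.2),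
        (if v x.1 ≤ v x.2 then (-1 : ℤˣ) else 1) = -1 := by
      intro x hx; rw [Finset.mem_filter] at hx; rw [if_pos hx.2]
    have h5 : ∀ x ∈ (Equiv.Perm.finPairsLT N).filter (fun x => ¬ v x.1 ≤ v x.2),
        (if v x.1 ≤ v x.2 then (-1 : ℤˣ) else 1) = 1 := by
      intro x hx; rw [Finset.mem_filter] at hx; rw [if_neg hx.2]
    rw [Finset.prod_congr rfl h4, Finset.prod_congr rfl h5, Finset.prod_const,
      Finset.prod_const_one, mul_one]
    congr 1
    apply Finset.card_nbij (fun x => (x.1, x.2))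
    · intro x hx
      simp only [Finset.mem_coe, Finset.mem_filter, Equiv.Perm.mem_finPairsLT] at hx
      simp only [Finset.mem_coe, Finset.mem_filter, Finset.mem_univ, true_and]
      exact ⟨hx.1, hx.2⟩
    · intro x hx y hy hxy
      simp only [Finset.mem_coe] at *
      cases x; cases y
      simp only [Prod.mk.injEq] at hxy
      simp [Sigma.ext_iff, hxy.1, hxy.2]
    · intro p hp
      simp only [Finset.coe_filter, Set.mem_setOf_eq, Finset.mem_univ, true_and] at hp
      refine ⟨⟨p.1, p.2⟩, ?_, rfl⟩
      simp only [Finset.mem_coe, Finset.mem_filter, Equiv.Perm.mem_finPairsLT]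
      exact ⟨hp.1, hp.2⟩
  exact h3 _ rfl

lemma aux_det_updateColumn_sum {R : Type*} [CommRing R] {N : ℕ} {ι : Type*}
    (A : Matrix (Fin N) (Fin N) R) (j : Fin N) (s : Finset ι) (g : ι → Fin N → R) :
    (A.updateCol j (fun a => ∑ l ∈ s, g l a)).det
      = ∑ l ∈ s, (A.updateCol j (g l)).det := by
  classical
  induction s using Finset.induction with
  | empty =>
    simp only [Finset.sum_empty]
    apply Matrix.det_eq_zero_of_column_eq_zero j
    intro a
    simp [Matrix.updateCol_self]
  | insert l₀ s' hnotmem ih =>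
    rw [Finset.sum_insert hnotmem]
    have : (fun a => ∑ l ∈ insert l₀ s', g l a) = (g l₀ + fun a => ∑ l ∈ s', g l a) := by
      funext a
      simp [Finset.sum_insert hnotmem]
    rw [this, Matrix.det_updateCol_add, ih]

lemma aux_mod_lt_iff {n e p q : ℕ} (hp : p < n) (hq : q < n) (he : e < n) :
    ((e + p) % n < (e + q) % n ↔ Xor' (p < q) (Xor' (n ≤ e + p) (n ≤ e + q))) := by
  have h1 : (e + p) % n = if n ≤ e + p then e + p - n else e + p := by
    split
    · rw [Nat.mod_eq_sub_mod (by omega), Nat.mod_eq_of_lt (by omega)]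
    · exact Nat.mod_eq_of_lt (by omega)
  have h2 : (e + q) % n = if n ≤ e + q then e + q - n else e + q := by
    split
    · rw [Nat.mod_eq_sub_mod (by omega), Nat.mod_eq_of_lt (by omega)]
    · exact Nat.mod_eq_of_lt (by omega)
  rw [h1, h2]
  unfold Xor' Xor
  split_ifs <;> omega

lemma aux_mod_inj {n e p q : ℕ} (hp : p < n) (hq : q < n) (he : e < n)
    (h : (e + p) % n = (e + q) % n) : p = q := by
  have h1 : (e + p) % n = if n ≤ e + p then e + p - n else e + p := by
    split
    · rw [Nat.mod_eq_sub_mod (by omega), Nat.mod_eq_of_lt (by omega)]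
    · exact Nat.mod_eq_of_lt (by omega)
  have h2 : (e + q) % n = if n ≤ e + q then e + q - n else e + q := by
    split
    · rw [Nat.mod_eq_sub_mod (by omega), Nat.mod_eq_of_lt (by omega)]
    · exact Nat.mod_eq_of_lt (by omega)
  rw [h1, h2] at h
  split_ifs at h <;> omega

lemma aux_neg_one_pow_congr {a b : ℕ} (h : (a : ZMod 2) = (b : ZMod 2)) :
    (-1 : ℤˣ) ^ a = (-1 : ℤˣ) ^ b := by
  have hab : a % 2 = b % 2 := (ZMod.natCast_eq_natCast_iff a b 2).1 h
  conv_lhs => rw [← Nat.div_add_mod a 2, pow_add, pow_mul, neg_one_sq, one_pow, one_mul]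
  conv_rhs => rw [← Nat.div_add_mod b 2, pow_add, pow_mul, neg_one_sq, one_pow, one_mul]
  rw [hab]

lemma aux_rep_eq {n : ℕ} [NeZero n] (hn : 2 ≤ n) (z : ZMod n) :
    rep n z = (z - 1).val + 1 := by
  haveI : Fact (1 < n) := ⟨by omega⟩
  unfold rep
  split
  · rename_i h
    have hz : z = 0 := (ZMod.val_eq_zero z).1 h
    subst hz
    rw [zero_sub, ZMod.neg_val, if_neg (one_ne_zero), ZMod.val_one]
    omega
  · rename_i h
    have h1 : 1 ≤ z.val := by omega
    have hlt : z.val - 1 < n := by have := ZMod.val_lt z; omega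
    have h3 : z - 1 = (((z.val - 1 : ℕ)) : ZMod n) := by
      have h4 : ((z.val - 1 : ℕ) : ZMod n) + 1 = z := by
        rw [← Nat.cast_one (R := ZMod n), ← Nat.cast_add, Nat.sub_add_cancel h1,
          ZMod.natCast_val, ZMod.cast_id]
      rw [sub_eq_iff_eq_add]
      exact h4.symm
    rw [h3, ZMod.val_cast_of_lt hlt]
    omega

lemma aux_rep_cast {n : ℕ} [NeZero n] (z : ZMod n) :
    ((rep n z : ℕ) : ZMod n) = z := by
  unfold rep
  split
  · rename_i h
    rw [ZMod.natCast_self]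
    exact ((ZMod.val_eq_zero z).1 h).symm
  · rw [ZMod.natCast_val, ZMod.cast_id]

lemma aux_rep_inj {n : ℕ} [NeZero n] (hn : 2 ≤ n) : Function.Injective (rep n) := by
  intro a b h
  have h1 := aux_rep_cast (n := n) a
  have h2 := aux_rep_cast (n := n) b
  rw [← h1, ← h2, h]

end AuxLemmas

theorem statement2 {R : Type*} [CommRing R] (k n : ℕ) (hk : 2 ≤ k) (hkn : 2 * k ≤ n)
    (M : Matrix (Fin k) (ZMod n) R) (r m : ZMod n)
    (hm : m ∈ cIcc n (r + (k : ZMod n)) (r - 2)) :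
    Matrix.det (Matrix.of fun i j : Fin (k + 1) =>
        pluck M (cSeg n (r + ((i : ℕ) : ZMod n)) (k - 1) ∪ {m + ((j : ℕ) : ZMod n)})) = 0 := by
  classical
  obtain ⟨K, rfl⟩ : ∃ K, k = K + 2 := ⟨k - 2, by omega⟩
  have hn4 : K + 4 ≤ n := by omega
  haveI : NeZero n := ⟨by omega⟩
  have hn2 : 2 ≤ n := by omega
  -- extract the position d of m relative to r
  obtain ⟨d, hd1, hd2, hmd⟩ : ∃ d : ℕ, K + 2 ≤ d ∧ d + 2 ≤ n ∧ m = r + (d : ZMod n) := by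
    rw [cIcc, cSeg] at hm
    simp only [Finset.mem_image, Finset.mem_range] at hm
    obtain ⟨t, ht, hmt⟩ := hm
    have h0 : (r - 2) - (r + ((K + 2 : ℕ) : ZMod n)) = -(((K + 4 : ℕ)) : ZMod n) := by
      push_cast
      ring
    have hL : ((r - 2) - (r + ((K + 2 : ℕ) : ZMod n))).val = n - (K + 4) := by
      rw [h0, ZMod.neg_val]
      split
      · rename_i h
        have h1 := (ZMod.natCast_eq_zero_iff _ _).1 h
        have h2 := Nat.le_of_dvd (by omega) h1
        omega
      · rename_i h
        rw [ZMod.val_cast_of_lt]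
        rcases Nat.lt_or_ge (K + 4) n with h3 | h3
        · exact h3
        · exfalso
          have h4 : K + 4 = n := by omega
          apply h
          rw [h4, ZMod.natCast_self]
    rw [hL] at ht
    refine ⟨K + 2 + t, by omega, by omega, ?_⟩
    rw [← hmt]
    push_cast
    ring
  set e : ℕ := (r - 1).val with he_def
  have he : e < n := ZMod.val_lt _
  set q : Fin (K + 2 + 1) → ℕ :=
    fun j => if d + (j : ℕ) < n then d + (j : ℕ) else d + (j : ℕ) - n with hq_def
  have hq_lt : ∀ j, q j < n := by
    intro j
    have := j.isLt
    simp only [hq_def]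
    split <;> omega
  have hm_eq : ∀ j : Fin (K + 2 + 1), m + ((j : ℕ) : ZMod n) = r + ((q j : ℕ) : ZMod n) := by
    intro j
    have h2 : ((d : ZMod n) + ((j : ℕ) : ZMod n)) = ((q j : ℕ) : ZMod n) := by
      simp only [hq_def]
      split
      · push_cast; ring
      · have h1 : (d + (j : ℕ) - n) + n = d + (j : ℕ) := by
          have := j.isLt; omega
        calc (d : ZMod n) + ((j : ℕ) : ZMod n)
            = (((d + (j : ℕ)) : ℕ) : ZMod n) := by push_cast; ring
          _ = ((((d + (j : ℕ) - n) + n : ℕ)) : ZMod n) := by rw [h1]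
          _ = ((d + (j : ℕ) - n : ℕ) : ZMod n) := by
              push_cast [ZMod.natCast_self]; ring
    rw [hmd, add_assoc, h2]
  set ρ : Fin (K + 2 + 1) → Fin (K + 2 + 1) → Fin (K + 2) → ℕ :=
    fun i j b => if (b : ℕ) < K + 1 then (i : ℕ) + (b : ℕ) else q j with hρ_def
  have hρ_lt : ∀ i j b, ρ i j b < n := by
    intro i j b
    simp only [hρ_def]
    split
    · have := i.isLt; omega
    · exact hq_lt j
  have hρ_small : ∀ i j (b : Fin (K + 2)), (b : ℕ) < K + 1 → ρ i j b = (i : ℕ) + (b : ℕ) := by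
    intro i j b hb; simp only [hρ_def, if_pos hb]
  have hρ_last : ∀ i j, ρ i j (Fin.last (K + 1)) = q j := by
    intro i j; simp only [hρ_def, Fin.val_last]
    rw [if_neg (by omega)]
  set φ : Fin (K + 2 + 1) → Fin (K + 2 + 1) → Fin (K + 2) → ZMod n :=
    fun i j b => r + ((ρ i j b : ℕ) : ZMod n) with hφ_def
  -- matrices
  set Cmat : Fin (K + 2 + 1) → Matrix (Fin (K + 2)) (Fin (K + 2)) R :=
    fun i => Matrix.of fun a b =>
      if (b : ℕ) < K + 1 then M a (r + ((((i : ℕ) + (b : ℕ)) : ℕ) : ZMod n)) else 0 with hC_def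
  set col : Fin (K + 2 + 1) → (Fin (K + 2) → R) :=
    fun j a => M a (r + ((q j : ℕ) : ZMod n)) with hcol_def
  set Nmat : Fin (K + 2 + 1) → Fin (K + 2 + 1) → Matrix (Fin (K + 2)) (Fin (K + 2)) R :=
    fun i j => (Cmat i).updateCol (Fin.last (K + 1)) (col j) with hN_def
  have hN : ∀ i j a b, Nmat i j a b = M a (φ i j b) := by
    intro i j a b
    simp only [hN_def, Matrix.updateCol_apply, hC_def, hφ_def, hρ_def, hcol_def,
      Matrix.of_apply]
    by_cases hb : b = Fin.last (K + 1)
    · subst hb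
      rw [if_pos rfl, if_neg (by simp [Fin.val_last])]
    · have hb' : (b : ℕ) < K + 1 := Fin.val_lt_last hb
      rw [if_neg hb, if_pos hb', if_pos hb']
  set Dmat : Matrix (Fin (K + 2 + 1)) (Fin (K + 2 + 1)) R :=
    Matrix.of (fun i j => (Nmat i j).det) with hD_def
  set cof : Fin (K + 2 + 1) → Fin (K + 2) → R :=
    fun i l => ((Cmat i).updateCol (Fin.last (K + 1)) (Pi.single l 1)).det with hcof_def
  have hDsum : ∀ i j, Dmat i j = ∑ l : Fin (K + 2), cof i l * M l (r + ((q j : ℕ) : ZMod n)) := by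
    intro i j
    have hcol2 : col j = fun a => ∑ l : Fin (K + 2),
        (fun l a => M l (r + ((q j : ℕ) : ZMod n)) • Pi.single l (1 : R) a) l a := by
      funext a
      simp only [hcol_def]
      rw [Finset.sum_eq_single a]
      · simp
      · intro l _ hla
        simp [Pi.single_apply, (Ne.symm hla : ¬ a = l)]
      · simp
    simp only [hD_def, hN_def, Matrix.of_apply]
    rw [hcol2, aux_det_updateColumn_sum]
    refine Finset.sum_congr rfl fun l _ => ?_
    rw [show (fun a => M l (r + ((q j : ℕ) : ZMod n)) • Pi.single l (1 : R) a)
        = (M l (r + ((q j : ℕ) : ZMod n)) • (Pi.single l (1 : R) : Fin (K + 2) → R)) from rfl,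
      Matrix.det_updateCol_smul]
    rw [mul_comm]
  have hdetD : Dmat.det = 0 := by
    set A' : Matrix (Fin (K + 2 + 1)) (Fin (K + 2 + 1)) R :=
      Matrix.of (fun i l => if h : (l : ℕ) < K + 2 then cof i ⟨(l : ℕ), h⟩ else 0) with hA'_def
    set B' : Matrix (Fin (K + 2 + 1)) (Fin (K + 2 + 1)) R :=
      Matrix.of (fun l j => if h : (l : ℕ) < K + 2
        then M ⟨(l : ℕ), h⟩ (r + ((q j : ℕ) : ZMod n)) else 0) with hB'_def
    have hfact : Dmat = A' * B' := by
      ext i j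
      rw [Matrix.mul_apply]
      have hDij : Dmat i j = ∑ l : Fin (K + 2), cof i l * M l (r + ((q j : ℕ) : ZMod n)) :=
        hDsum i j
      rw [hDij]
      rw [Fin.sum_univ_castSucc (n := K + 2)]
      have hlast : A' i (Fin.last (K + 2)) * B' (Fin.last (K + 2)) j = 0 := by
        have : ¬ ((Fin.last (K + 2) : Fin (K + 2 + 1)) : ℕ) < K + 2 := by
          simp [Fin.val_last]
        simp only [hA'_def, Matrix.of_apply, dif_neg this]
        ring
      rw [hlast, add_zero]
      refine Finset.sum_congr rfl fun l _ => ?_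
      have hl : ((l.castSucc : Fin (K + 2 + 1)) : ℕ) < K + 2 := by
        simp only [Fin.coe_castSucc]
        exact l.isLt
      simp only [hA'_def, hB'_def, Matrix.of_apply, dif_pos hl]
      congr 1
    rw [hfact, Matrix.det_mul]
    have hA0 : A'.det = 0 := by
      apply Matrix.det_eq_zero_of_column_eq_zero (Fin.last (K + 2))
      intro i
      have : ¬ ((Fin.last (K + 2) : Fin (K + 2 + 1)) : ℕ) < K + 2 := by
        simp [Fin.val_last]
      simp only [hA'_def, Matrix.of_apply, dif_neg this]
    rw [hA0, zero_mul]
  -- the signs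
  set W : Fin (K + 2 + 1) → ℕ := fun i =>
    (Finset.univ.filter
      (fun b : Fin (K + 1) => n ≤ e + ((i : ℕ) + (b : ℕ)))).card with hW_def
  set Bj : Fin (K + 2 + 1) → ℕ := fun j =>
    (if n ≤ d + (j : ℕ) then 1 else 0) + (if n ≤ e + q j then 1 else 0) with hB_def
  set sg : Fin (K + 2 + 1) → R := fun i => (-1 : R) ^ ((K + 1) * W i) with hs_def
  set tg : Fin (K + 2 + 1) → R := fun j => (-1 : R) ^ ((K + 1) * Bj j) with ht_def
  -- basic facts about cSeg
  have hseg : ∀ (i : Fin (K + 2 + 1)) (z : ZMod n),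
      z ∈ cSeg n (r + ((i : ℕ) : ZMod n)) (K + 1) ↔
        ∃ t : ℕ, t < K + 1 ∧ z = r + ((((i : ℕ) + t) : ℕ) : ZMod n) := by
    intro i z
    simp only [cSeg, Finset.mem_image, Finset.mem_range]
    constructor
    · rintro ⟨t, ht, rfl⟩
      exact ⟨t, ht, by push_cast; ring⟩
    · rintro ⟨t, ht, rfl⟩
      exact ⟨t, ht, by push_cast; ring⟩
  have hcastinj : ∀ p p' : ℕ, p < n → p' < n →
      r + ((p : ℕ) : ZMod n) = r + ((p' : ℕ) : ZMod n) → p = p' := by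
    intro p p' hp hp' h
    have h1 := add_left_cancel h
    have h2 := congrArg ZMod.val h1
    rwa [ZMod.val_cast_of_lt hp, ZMod.val_cast_of_lt hp'] at h2
  have hsegcard : ∀ i : Fin (K + 2 + 1), (cSeg n (r + ((i : ℕ) : ZMod n)) (K + 1)).card = K + 1 := by
    intro i
    rw [cSeg, Finset.card_image_of_injOn, Finset.card_range]
    intro a ha b hb hab
    simp only [Finset.coe_range, Set.mem_Iio] at ha hb
    have h1 := add_left_cancel hab
    have h2 := congrArg ZMod.val h1
    rwa [ZMod.val_cast_of_lt (by omega), ZMod.val_cast_of_lt (by omega)] at h2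
  -- the key entrywise identity
  have hE : ∀ i j : Fin (K + 2 + 1),
      pluck M (cSeg n (r + ((i : ℕ) : ZMod n)) (K + 2 - 1) ∪ {m + ((j : ℕ) : ZMod n)})
        = sg i * (tg j * Dmat i j) := by
    intro i j
    have hK21 : K + 2 - 1 = K + 1 := rfl
    rw [hK21]
    by_cases hdeg : (i : ℕ) ≤ q j ∧ q j ≤ (i : ℕ) + K
    · -- degenerate case: the extra column lies in the segment
      have hmem : m + ((j : ℕ) : ZMod n) ∈ cSeg n (r + ((i : ℕ) : ZMod n)) (K + 1) := by
        rw [hseg]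
        refine ⟨q j - (i : ℕ), by omega, ?_⟩
        rw [hm_eq j]
        congr 2
        omega
      have hunion : cSeg n (r + ((i : ℕ) : ZMod n)) (K + 1) ∪ {m + ((j : ℕ) : ZMod n)}
          = cSeg n (r + ((i : ℕ) : ZMod n)) (K + 1) := by
        rw [Finset.union_eq_left]
        simpa using hmem
      have hpluck0 : pluck M (cSeg n (r + ((i : ℕ) : ZMod n)) (K + 1)
          ∪ {m + ((j : ℕ) : ZMod n)}) = 0 := by
        rw [hunion, pluck, dif_neg]
        intro hcon
        rw [hsegcard i] at hcon
        omega
      have hD0 : Dmat i j = 0 := by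
        have hb0lt : q j - (i : ℕ) < K + 1 := by omega
        set b0 : Fin (K + 2) := (⟨q j - (i : ℕ), hb0lt⟩ : Fin (K + 1)).castSucc with hb0
        have hne : b0 ≠ Fin.last (K + 1) := by
          rw [hb0]
          exact (Fin.castSucc_lt_last _).ne
        simp only [hD_def, Matrix.of_apply]
        apply Matrix.det_zero_of_column_eq hne
        intro a
        rw [hN i j a b0, hN i j a (Fin.last (K + 1))]
        simp only [hφ_def]
        have hb0v : (b0 : ℕ) = q j - (i : ℕ) := by rw [hb0]; rfl
        rw [hρ_last, hρ_small i j b0 (by rw [hb0v]; omega), hb0v]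
        have harith : (i : ℕ) + (q j - (i : ℕ)) = q j := by omega
        rw [harith]
      rw [hpluck0, hD0]
      ring
    · -- nondegenerate case
      have hkey : ∀ b : ℕ, b ≤ K → (q j < (i : ℕ) + b ↔ n ≤ d + (j : ℕ)) := by
        intro b hb
        have hi := i.isLt
        have hj := j.isLt
        simp only [hq_def] at hdeg ⊢
        split_ifs at hdeg ⊢ with h1 <;> omega
      have hρinj : Function.Injective (ρ i j) := by
        intro b c hbc
        have hcase : ∀ x : Fin (K + 2), (x : ℕ) < K + 1 ∨ x = Fin.last (K + 1) := by
          intro x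
          rcases eq_or_ne x (Fin.last (K + 1)) with h | h
          · right; exact h
          · left; exact Fin.val_lt_last h
        rcases hcase b with hb | hb <;> rcases hcase c with hc | hc
        · rw [hρ_small i j b hb, hρ_small i j c hc] at hbc
          exact Fin.ext (by omega)
        · subst hc
          rw [hρ_small i j b hb, hρ_last] at hbc
          exact absurd ⟨by omega, by omega⟩ hdeg
        · subst hb
          rw [hρ_last, hρ_small i j c hc] at hbc
          exact absurd ⟨by omega, by omega⟩ hdeg
        · rw [hb, hc]
      have hφinj : Function.Injective (φ i j) := by
        intro b c hbc
        simp only [hφ_def] at hbc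
        exact hρinj (hcastinj _ _ (hρ_lt i j b) (hρ_lt i j c) hbc)
      set I : Finset (ZMod n) := Finset.image (φ i j) Finset.univ with hI_def
      have himg : I = cSeg n (r + ((i : ℕ) : ZMod n)) (K + 1) ∪ {m + ((j : ℕ) : ZMod n)} := by
        ext z
        simp only [hI_def, Finset.mem_image, Finset.mem_univ, true_and, Finset.mem_union,
          Finset.mem_singleton]
        constructor
        · rintro ⟨b, rfl⟩
          rcases Nat.lt_or_ge (b : ℕ) (K + 1) with hb | hb
          · left
            rw [hseg]
            refine ⟨(b : ℕ), hb, ?_⟩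
            simp only [hφ_def, hρ_small i j b hb]
          · have hb' : b = Fin.last (K + 1) := by
              have := b.isLt
              apply Fin.ext
              rw [Fin.val_last]
              omega
            right
            rw [hb', hm_eq j]
            simp only [hφ_def, hρ_last]
        · rintro (hz | rfl)
          · rw [hseg] at hz
            obtain ⟨t, ht, rfl⟩ := hz
            have ht2 : (((⟨t, ht⟩ : Fin (K + 1)).castSucc : Fin (K + 2)) : ℕ) = t := rfl
            refine ⟨(⟨t, ht⟩ : Fin (K + 1)).castSucc, ?_⟩
            simp only [hφ_def]
            rw [hρ_small i j _ (by rw [ht2]; omega), ht2]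
          · refine ⟨Fin.last (K + 1), ?_⟩
            rw [hm_eq j]
            simp only [hφ_def]
            rw [hρ_last]
      have hIcard : I.card = K + 2 := by
        rw [hI_def, Finset.card_image_of_injective _ hφinj, Finset.card_univ, Fintype.card_fin]
      have hJcard : (I.image (rep n)).card = K + 2 := by
        rw [Finset.card_image_of_injective _ (aux_rep_inj hn2), hIcard]
      set v : Fin (K + 2) → ℕ := fun b => rep n (φ i j b) with hv_def
      have hv : ∀ b, v b = (e + ρ i j b) % n + 1 := by
        intro b
        simp only [hv_def]
        rw [aux_rep_eq hn2]
        congr 1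
        have h1 : φ i j b - 1 = (r - 1) + ((ρ i j b : ℕ) : ZMod n) := by
          simp only [hφ_def]; ring
        rw [h1, ZMod.val_add, ZMod.val_cast_of_lt (hρ_lt i j b), ← he_def]
      have hvinj : Function.Injective v := by
        intro b c hbc
        rw [hv b, hv c] at hbc
        exact hρinj (aux_mod_inj (hρ_lt i j b) (hρ_lt i j c) he (by omega))
      set σ : Equiv.Perm (Fin (K + 2)) := Tuple.sort v with hσ_def
      have hmono : StrictMono (v ∘ σ) :=
        (Tuple.monotone_sort v).strictMono_of_injective (hvinj.comp σ.injective)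
      have hord : (v ∘ σ) = ⇑((I.image (rep n)).orderEmbOfFin hJcard) := by
        apply Finset.orderEmbOfFin_unique hJcard ?_ hmono
        intro x
        simp only [Function.comp_apply, hv_def]
        exact Finset.mem_image_of_mem _ (Finset.mem_image_of_mem _ (Finset.mem_univ (σ x)))
      have hcoe : ∀ b : Fin (K + 2),
          (((I.image (rep n)).orderIsoOfFin hJcard b : ℕ) : ZMod n) = φ i j (σ b) := by
        intro b
        have h1 : ((I.image (rep n)).orderIsoOfFin hJcard b : ℕ)
            = (I.image (rep n)).orderEmbOfFin hJcard b :=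
          Finset.coe_orderIsoOfFin_apply _ _ _
        rw [h1, ← hord]
        simp only [Function.comp_apply, hv_def]
        exact aux_rep_cast _
      rw [← himg]
      rw [pluck, dif_pos (show ((I.image (rep n)).card = K + 2 ∧ I.card = K + 2)
        from ⟨hJcard, hIcard⟩)]
      have hmatrix : (Matrix.of fun a b : Fin (K + 2) =>
          M a ((((I.image (rep n)).orderIsoOfFin hJcard b : ℕ) : ZMod n)))
          = (Nmat i j).submatrix id σ := by
        ext a b
        rw [Matrix.submatrix_apply, id_eq, hN i j a (σ b), Matrix.of_apply, hcoe b]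
      rw [show (Matrix.of fun a b : Fin (K + 2) =>
          M a ((((I.image (rep n)).orderIsoOfFin hJcard b : ℕ) : ZMod n)))
          = (Nmat i j).submatrix id σ from hmatrix]
      rw [Matrix.det_permute' σ]
      have hsign : Equiv.Perm.sign σ = (-1 : ℤˣ) ^ ((K + 1) * W i + (K + 1) * Bj j) := by
        rw [aux_sign_sort v σ hmono]
        apply aux_neg_one_pow_congr
        -- pointwise xor decomposition
        have hwv : ∀ a b : Fin (K + 2), b < a → (v a ≤ v b ↔
            Xor' (ρ i j a < ρ i j b) (Xor' (n ≤ e + ρ i j a) (n ≤ e + ρ i j b))) := by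
          intro a b hba
          have hne : ρ i j a ≠ ρ i j b := fun hcon => (Ne.symm (Fin.ne_of_lt hba)) (hρinj hcon)
          have h2 : (e + ρ i j a) % n ≠ (e + ρ i j b) % n := by
            intro hcon
            exact hne (aux_mod_inj (hρ_lt i j a) (hρ_lt i j b) he hcon)
          have h1 : v a ≤ v b ↔ (e + ρ i j a) % n < (e + ρ i j b) % n := by
            rw [hv a, hv b]; omega
          rw [h1, aux_mod_lt_iff (hρ_lt i j a) (hρ_lt i j b) he]
        rw [Finset.card_filter, Nat.cast_sum]
        have hcastite : ∀ p : Fin (K + 2) × Fin (K + 2),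
            (((if p.2 < p.1 ∧ v p.1 ≤ v p.2 then (1 : ℕ) else 0) : ℕ) : ZMod 2)
            = (if p.2 < p.1 ∧ v p.1 ≤ v p.2 then (1 : ZMod 2) else 0) := by
          intro p; split_ifs <;> simp
        rw [Finset.sum_congr rfl fun p _ => hcastite p]
        have hpoint : ∀ p : Fin (K + 2) × Fin (K + 2),
            (if p.2 < p.1 ∧ v p.1 ≤ v p.2 then (1 : ZMod 2) else 0)
            = ((if p.2 < p.1 ∧ ρ i j p.1 < ρ i j p.2 then (1 : ZMod 2) else 0)
            + (if p.2 < p.1 ∧ n ≤ e + ρ i j p.1 then (1 : ZMod 2) else 0))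
            + (if p.2 < p.1 ∧ n ≤ e + ρ i j p.2 then (1 : ZMod 2) else 0) := by
          intro p
          by_cases h21 : p.2 < p.1
          · have hiff := hwv p.1 p.2 h21
            simp only [h21, true_and]
            rw [if_congr hiff rfl rfl]
            by_cases hA : ρ i j p.1 < ρ i j p.2 <;> by_cases hB : n ≤ e + ρ i j p.1 <;>
              by_cases hC : n ≤ e + ρ i j p.2 <;>
              simp [Xor', Xor, hA, hB, hC] <;> decide
          · simp [h21]
        rw [Finset.sum_congr rfl fun p _ => hpoint p]
        rw [Finset.sum_add_distrib, Finset.sum_add_distrib]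
        -- the three sums
        have hS1 : (∑ p : Fin (K + 2) × Fin (K + 2),
            if p.2 < p.1 ∧ ρ i j p.1 < ρ i j p.2 then (1 : ZMod 2) else 0)
            = ((K + 1 : ℕ) : ZMod 2) * (if n ≤ d + (j : ℕ) then 1 else 0) := by
          rw [Fintype.sum_prod_type]
          rw [Finset.sum_eq_single (Fin.last (K + 1))]
          · have hlast : ∀ b : Fin (K + 2),
                (if b < Fin.last (K + 1) ∧ ρ i j (Fin.last (K + 1)) < ρ i j b
                  then (1 : ZMod 2) else 0)
                = (if b < Fin.last (K + 1) then (1 : ZMod 2) else 0)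
                  * (if n ≤ d + (j : ℕ) then 1 else 0) := by
              intro b
              by_cases hb : b < Fin.last (K + 1)
              · have hb' : (b : ℕ) < K + 1 := by
                  rw [Fin.lt_iff_val_lt_val, Fin.val_last] at hb; exact hb
                rw [hρ_last, hρ_small i j b hb']
                have hk2 := hkey (b : ℕ) (by omega)
                by_cases hd' : n ≤ d + (j : ℕ)
                · simp [hb, hd', hk2.mpr hd']
                · have hnc : ¬ (q j < (i : ℕ) + (b : ℕ)) := fun hcon => hd' (hk2.mp hcon)
                  simp [hb, hd', hnc]
              · simp [hb]
            rw [Finset.sum_congr rfl fun b _ => hlast b, ← Finset.sum_mul]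
            congr 1
            rw [Finset.sum_boole]
            rw [show Finset.univ.filter (fun b : Fin (K + 2) => b < Fin.last (K + 1))
              = Finset.Iio (Fin.last (K + 1)) from by
                ext b; simp only [Finset.mem_filter, Finset.mem_univ, true_and, Finset.mem_Iio]]
            rw [Fin.card_Iio, Fin.val_last]
          · intro a _ ha
            apply Finset.sum_eq_zero
            intro b _
            dsimp only
            rw [if_neg]
            rintro ⟨hba, hrlt⟩
            have ha' : (a : ℕ) < K + 1 := Fin.val_lt_last ha
            have hb' : (b : ℕ) < K + 1 := by
              rw [Fin.lt_iff_val_lt_val] at hba; omega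
            rw [hρ_small i j a ha', hρ_small i j b hb'] at hrlt
            rw [Fin.lt_iff_val_lt_val] at hba
            omega
          · intro hcon
            exact absurd (Finset.mem_univ _) hcon
        have hS2 : (∑ p : Fin (K + 2) × Fin (K + 2),
            if p.2 < p.1 ∧ n ≤ e + ρ i j p.1 then (1 : ZMod 2) else 0)
            = ∑ a : Fin (K + 2), ((a : ℕ) : ZMod 2)
              * (if n ≤ e + ρ i j a then (1 : ZMod 2) else 0) := by
          rw [Fintype.sum_prod_type]
          refine Finset.sum_congr rfl fun a _ => ?_
          have hsplit : ∀ b : Fin (K + 2),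
              (if b < a ∧ n ≤ e + ρ i j a then (1 : ZMod 2) else 0)
              = (if b < a then (1 : ZMod 2) else 0)
                * (if n ≤ e + ρ i j a then (1 : ZMod 2) else 0) := by
            intro b
            by_cases h1 : b < a <;> by_cases h2 : n ≤ e + ρ i j a <;> simp [h1, h2]
          rw [Finset.sum_congr rfl fun b _ => hsplit b, ← Finset.sum_mul]
          congr 1
          rw [Finset.sum_boole]
          rw [show Finset.univ.filter (fun b : Fin (K + 2) => b < a) = Finset.Iio a from by
            ext b; simp only [Finset.mem_filter, Finset.mem_univ, true_and, Finset.mem_Iio]]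
          rw [Fin.card_Iio]
        have hS3 : (∑ p : Fin (K + 2) × Fin (K + 2),
            if p.2 < p.1 ∧ n ≤ e + ρ i j p.2 then (1 : ZMod 2) else 0)
            = ∑ b : Fin (K + 2), ((K + 1 - (b : ℕ) : ℕ) : ZMod 2)
              * (if n ≤ e + ρ i j b then (1 : ZMod 2) else 0) := by
          rw [Fintype.sum_prod_type, Finset.sum_comm]
          refine Finset.sum_congr rfl fun b _ => ?_
          have hsplit : ∀ a : Fin (K + 2),
              (if b < a ∧ n ≤ e + ρ i j b then (1 : ZMod 2) else 0)
              = (if b < a then (1 : ZMod 2) else 0)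
                * (if n ≤ e + ρ i j b then (1 : ZMod 2) else 0) := by
            intro a
            by_cases h1 : b < a <;> by_cases h2 : n ≤ e + ρ i j b <;> simp [h1, h2]
          rw [Finset.sum_congr rfl fun a _ => hsplit a, ← Finset.sum_mul]
          congr 1
          rw [Finset.sum_boole]
          rw [show Finset.univ.filter (fun a : Fin (K + 2) => b < a) = Finset.Ioi b from by
            ext a; simp only [Finset.mem_filter, Finset.mem_univ, true_and, Finset.mem_Ioi]]
          rw [Fin.card_Ioi]
          congr 1
        rw [hS1, hS2, hS3]
        have hsum23 : (∑ a : Fin (K + 2), ((a : ℕ) : ZMod 2)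
              * (if n ≤ e + ρ i j a then (1 : ZMod 2) else 0))
            + (∑ b : Fin (K + 2), ((K + 1 - (b : ℕ) : ℕ) : ZMod 2)
              * (if n ≤ e + ρ i j b then (1 : ZMod 2) else 0))
            = ((K + 1 : ℕ) : ZMod 2)
              * ∑ c : Fin (K + 2), (if n ≤ e + ρ i j c then (1 : ZMod 2) else 0) := by
          rw [← Finset.sum_add_distrib, Finset.mul_sum]
          refine Finset.sum_congr rfl fun c _ => ?_
          rw [← add_mul]
          congr 1
          have hc := c.isLt
          have hcc : ((c : ℕ) : ZMod 2) + ((K + 1 - (c : ℕ) : ℕ) : ZMod 2)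
              = (((c : ℕ) + (K + 1 - (c : ℕ)) : ℕ) : ZMod 2) := by push_cast; ring
          rw [hcc]
          congr 1
          omega
        rw [add_assoc, hsum23]
        have hgsum : (∑ c : Fin (K + 2), (if n ≤ e + ρ i j c then (1 : ZMod 2) else 0))
            = ((W i : ℕ) : ZMod 2) + (if n ≤ e + q j then (1 : ZMod 2) else 0) := by
          rw [Fin.sum_univ_castSucc (n := K + 1)]
          congr 1
          · have hterm : ∀ b : Fin (K + 1),
                (if n ≤ e + ρ i j b.castSucc then (1 : ZMod 2) else 0)
                = (if n ≤ e + ((i : ℕ) + (b : ℕ)) then (1 : ZMod 2) else 0) := by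
              intro b
              rw [hρ_small i j b.castSucc (by rw [Fin.coe_castSucc]; exact b.isLt),
                Fin.coe_castSucc]
            rw [Finset.sum_congr rfl fun b _ => hterm b, Finset.sum_boole]
          · rw [hρ_last]
        rw [hgsum]
        simp only [hB_def]
        push_cast
        split_ifs <;> ring
      rw [hsign]
      have hDij : (Nmat i j).det = Dmat i j := by simp only [hD_def, Matrix.of_apply]
      rw [hDij]
      have hcast : ((((-1 : ℤˣ) ^ ((K + 1) * W i + (K + 1) * Bj j) : ℤˣ) : ℤ) : R)
          = sg i * tg j := by
        simp only [hs_def, ht_def]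
        push_cast
        rw [pow_add]
      rw [hcast]
      ring
  -- conclude
  have hG : (Matrix.of fun i j : Fin (K + 2 + 1) =>
      pluck M (cSeg n (r + ((i : ℕ) : ZMod n)) (K + 2 - 1) ∪ {m + ((j : ℕ) : ZMod n)}))
      = Matrix.of (fun i j => sg i * ((Matrix.of fun i' j' => tg j' * Dmat i' j') i j)) := by
    ext i j
    simp only [Matrix.of_apply]
    exact hE i j
  rw [hG, Matrix.det_mul_column, Matrix.det_mul_row, hdetD, mul_zero, mul_zero]
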